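/- Let 0 ≤ δ₁ < δ₂ < ∞ and E be a measurable subset of [δ₁,δ₂] with positive Lebesgue measure. Then there exist constants ρ ∈ (0,1) and C₀, C₀′ > 0 such that for almost every t* ∈ E and every R > 0, there exists a strictly decreasing sequence (t_j)_{j≥0} in (t*, t*+R) ∩ E with t_j → t*, satisfying: (i) for all j ≥ 1, λ((t_j, (t_j + t_{j−1})/2) ∩ E) ≥ ρ·(t_{j−1} − t_j)/2 > 0; (ii) for all j ≥ 1, t_j − t_{j+1} ≥ C₀(t_{j−1} − t_j) > 0; (iii) t₀ − t₁ ≥ C₀′(t₀ − t*) > 0. -/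

import Mathlib

open MeasureTheory Filter Topology

lemma aux_density (E : Set ℝ) :
    ∀ᵐ x ∂(volume.restrict E), ∃ h > 0, ∀ r : ℝ, 0 < r → r < h →
      ENNReal.ofReal (15/16 * r) ≤ volume (E ∩ Set.Ioo x (x + r)) := by
  filter_upwards [Besicovitch.ae_tendsto_measure_inter_div volume E] with x hx
  have hlt : (ENNReal.ofReal (31/32)) < 1 := by
    rw [ENNReal.ofReal_lt_one]; norm_num
  have hev : ∀ᶠ r in 𝓝[>] (0:ℝ),
      ENNReal.ofReal (31/32) < volume (E ∩ Metric.closedBall x r) / volume (Metric.closedBall x r) :=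
    hx (Ioi_mem_nhds hlt)
  rw [Filter.eventually_iff, Metric.mem_nhdsWithin_iff] at hev
  obtain ⟨ε, εpos, hε⟩ := hev
  refine ⟨ε, εpos, fun r hr hrε => ?_⟩
  have hmem : r ∈ Metric.ball (0:ℝ) ε ∩ Set.Ioi 0 := by
    constructor
    · simp [Real.dist_eq, abs_of_pos hr, hrε]
    · exact hr
  have hratio := hε hmem
  have hcb : volume (Metric.closedBall x r) = ENNReal.ofReal (2 * r) := Real.volume_closedBall x r
  have hb0 : volume (Metric.closedBall x r) ≠ 0 := by
    rw [hcb]; simp [ENNReal.ofReal_eq_zero]; linarith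
  have hbt : volume (Metric.closedBall x r) ≠ ⊤ := by rw [hcb]; exact ENNReal.ofReal_ne_top
  have hmul : ENNReal.ofReal (31/32) * volume (Metric.closedBall x r)
      < volume (E ∩ Metric.closedBall x r) :=
    (ENNReal.lt_div_iff_mul_lt (Or.inl hb0) (Or.inl hbt)).mp hratio
  rw [hcb, ← ENNReal.ofReal_mul (by norm_num)] at hmul
  have hincl : E ∩ Metric.closedBall x r ⊆
      (E ∩ Set.Ioo x (x + r)) ∪ (Set.Icc (x - r) x ∪ {x + r}) := by
    intro y ⟨hyE, hy⟩
    rw [Metric.mem_closedBall, Real.dist_eq, abs_le] at hy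
    rcases le_or_gt y x with h | h
    · exact Or.inr (Or.inl ⟨by linarith [hy.1], h⟩)
    · rcases lt_or_eq_of_le hy.2 with h2 | h2
      · exact Or.inl ⟨hyE, h, by linarith⟩
      · exact Or.inr (Or.inr (by simp [show y = x + r by linarith]))
  have hle : volume (E ∩ Metric.closedBall x r) ≤
      volume (E ∩ Set.Ioo x (x + r)) + ENNReal.ofReal r := by
    calc volume (E ∩ Metric.closedBall x r)
        ≤ volume ((E ∩ Set.Ioo x (x + r)) ∪ (Set.Icc (x - r) x ∪ {x + r})) := measure_mono hincl
      _ ≤ volume (E ∩ Set.Ioo x (x + r)) + volume (Set.Icc (x - r) x ∪ {(x + r)}) := measure_union_le _ _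
      _ ≤ volume (E ∩ Set.Ioo x (x + r)) + (volume (Set.Icc (x - r) x) + volume {(x + r)}) :=
          add_le_add le_rfl (measure_union_le _ _)
      _ = volume (E ∩ Set.Ioo x (x + r)) + ENNReal.ofReal r := by
          rw [Real.volume_Icc, Real.volume_singleton]
          ring_nf
  have key : ENNReal.ofReal (31/32 * (2 * r)) ≤ volume (E ∩ Set.Ioo x (x + r)) + ENNReal.ofReal r :=
    le_trans hmul.le hle
  have : ENNReal.ofReal (31/32 * (2 * r)) - ENNReal.ofReal r ≤ volume (E ∩ Set.Ioo x (x + r)) :=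
    tsub_le_iff_right.mpr key
  rw [← ENNReal.ofReal_sub _ hr.le] at this
  refine le_trans (ENNReal.ofReal_le_ofReal (by linarith)) this

/-- Proposition 3.1 of the paper. -/
theorem exists_good_sequence_in_measurable_set (δ₁ δ₂ : ℝ) (h₁ : 0 ≤ δ₁) (h₂ : δ₁ < δ₂)
    (E : Set ℝ) (hE : MeasurableSet E) (hEsub : E ⊆ Set.Icc δ₁ δ₂)
    (hpos : 0 < volume E) :
    ∃ ρ C₀ C₀' : ℝ, 0 < ρ ∧ ρ < 1 ∧ 0 < C₀ ∧ 0 < C₀' ∧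
      ∀ᵐ tstar ∂(volume.restrict E), ∀ R : ℝ, 0 < R →
        ∃ t : ℕ → ℝ, StrictAnti t ∧
          (∀ j : ℕ, t j ∈ Set.Ioo tstar (tstar + R) ∩ E) ∧
          Tendsto t atTop (𝓝 tstar) ∧
          (∀ j : ℕ, 1 ≤ j →
            ENNReal.ofReal (ρ * ((t (j - 1) - t j) / 2)) ≤
              volume (Set.Ioo (t j) ((t j + t (j - 1)) / 2) ∩ E) ∧
            0 < (t (j - 1) - t j) / 2) ∧
          (∀ j : ℕ, 1 ≤ j →
            C₀ * (t (j - 1) - t j) ≤ t j - t (j + 1) ∧ 0 < C₀ * (t (j - 1) - t j)) ∧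
          (C₀' * (t 0 - tstar) ≤ t 0 - t 1 ∧ 0 < C₀' * (t 0 - tstar)) := by
  refine ⟨3/4, 1/12, 1/4, by norm_num, by norm_num, by norm_num, by norm_num, ?_⟩
  filter_upwards [aux_density E] with x hx
  obtain ⟨h, hpos', hdens⟩ := hx
  intro R hR
  -- nonemptiness of E near x at every scale
  have hne : ∀ d : ℝ, 0 < d → d < h → ∃ y, y ∈ E ∧ y ∈ Set.Ioo (x + d/3) (x + d/2) := by
    intro d hd hdh
    by_contra hcon
    push_neg at hcon
    have hsub : E ∩ Set.Ioo x (x + d/2) ⊆ Set.Ioc x (x + d/3) := by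
      intro y ⟨hyE, hy1, hy2⟩
      refine ⟨hy1, ?_⟩
      by_contra hy3
      push_neg at hy3
      exact absurd ⟨hy3, hy2⟩ (hcon y hyE)
    have h1 := hdens (d/2) (by linarith) (by linarith)
    have h2 : volume (E ∩ Set.Ioo x (x + d/2)) ≤ ENNReal.ofReal (d/3) := by
      calc volume (E ∩ Set.Ioo x (x + d/2)) ≤ volume (Set.Ioc x (x + d/3)) := measure_mono hsub
        _ = ENNReal.ofReal (d/3) := by rw [Real.volume_Ioc]; ring_nf
    have := le_trans h1 h2
    rw [ENNReal.ofReal_le_ofReal_iff (by linarith)] at this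
    linarith
  -- choice function
  have hchoice : ∀ d : ℝ, ∃ y : ℝ, (0 < d ∧ d < h) →
      (y ∈ E ∧ y ∈ Set.Ioo (x + d/3) (x + d/2)) := by
    intro d
    by_cases hd : 0 < d ∧ d < h
    · obtain ⟨y, hy⟩ := hne d hd.1 hd.2
      exact ⟨y, fun _ => hy⟩
    · exact ⟨x, fun hc => absurd hc hd⟩
  choose F hF using hchoice
  set s : ℝ := min R (h/2) with hs
  have hspos : 0 < s := lt_min hR (by linarith)
  have hsh : s < h := lt_of_le_of_lt (min_le_right R (h/2)) (by linarith)
  have hsR : s ≤ R := min_le_left _ _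
  -- the sequence
  set t : ℕ → ℝ := fun n => Nat.rec (F s) (fun _ p => F (p - x)) n with ht
  have ht0 : t 0 = F s := rfl
  have htsucc : ∀ n, t (n + 1) = F (t n - x) := fun n => rfl
  have hF0 := hF s ⟨hspos, hsh⟩
  -- invariant
  have inv : ∀ n, t n ∈ E ∧ 0 < t n - x ∧ t n - x ≤ s / 2 := by
    intro n
    induction n with
    | zero =>
      obtain ⟨he, h1, h2⟩ := hF0
      exact ⟨he, by rw [ht0]; constructor <;> [linarith; linarith]⟩
    | succ n ih =>
      obtain ⟨_, hd0, hds⟩ := ih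
      have := hF (t n - x) ⟨hd0, by linarith⟩
      obtain ⟨he, h1, h2⟩ := this
      rw [← htsucc] at h1 h2
      exact ⟨by rw [htsucc]; exact he, by constructor <;> linarith⟩
  have step : ∀ n, (t n - x)/3 < t (n+1) - x ∧ t (n+1) - x < (t n - x)/2 := by
    intro n
    obtain ⟨_, hd0, hds⟩ := inv n
    have := hF (t n - x) ⟨hd0, by linarith⟩
    obtain ⟨_, h1, h2⟩ := this
    rw [← htsucc] at h1 h2
    constructor <;> linarith
  have hanti : StrictAnti t := by
    apply strictAnti_nat_of_succ_lt
    intro n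
    have h1 := (step n).2
    have h2 := (inv n).2.1
    linarith
  refine ⟨t, hanti, ?_, ?_, ?_, ?_, ?_⟩
  · -- membership
    intro j
    obtain ⟨he, hd0, hds⟩ := inv j
    exact ⟨⟨by linarith, by linarith⟩, he⟩
  · -- tendsto
    have hb : ∀ n, t n - x ≤ s/2 * (1/2)^n := by
      intro n
      induction n with
      | zero => simpa using (inv 0).2.2
      | succ n ih =>
        have := (step n).2
        have : t (n+1) - x < (s/2 * (1/2)^n)/2 := by linarith
        calc t (n+1) - x ≤ (s/2 * (1/2)^n)/2 := this.le
          _ = s/2 * (1/2)^(n+1) := by ring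
    have h0 : Tendsto (fun n : ℕ => s/2 * (1/2:ℝ)^n) atTop (𝓝 0) := by
      simpa using (tendsto_pow_atTop_nhds_zero_of_lt_one (by norm_num : (0:ℝ) ≤ 1/2)
        (by norm_num)).const_mul (s/2)
    have hsq : Tendsto (fun n => t n - x) atTop (𝓝 0) :=
      squeeze_zero (fun n => (inv n).2.1.le) hb h0
    have := hsq.add_const x
    simpa using this
  · -- (i)
    intro j hj
    obtain ⟨i, rfl⟩ := Nat.exists_eq_add_of_le hj
    have e1 : 1 + i - 1 = i := by omega
    have e2 : 1 + i = i + 1 := by omega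
    rw [e1, e2]
    obtain ⟨_, hb0, hbs⟩ := inv i
    obtain ⟨_, ha0, _⟩ := inv (i + 1)
    obtain ⟨hst1, hst2⟩ := step i
    set a := t (i + 1) with hadef
    set b := t i with hbdef
    have hab : a < b := by linarith
    constructor
    · -- measure bound
      set r : ℝ := (a + b) / 2 - x with hrdef
      have hr0 : 0 < r := by simp only [hrdef]; linarith
      have hrh : r < h := by
        have : r ≤ b - x := by simp only [hrdef]; linarith
        linarith
      have h1 := hdens r hr0 hrh
      have hxr : x + r = (a + b) / 2 := by simp only [hrdef]; ring
      rw [hxr] at h1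
      have hincl : E ∩ Set.Ioo x ((a + b) / 2) ⊆
          (Set.Ioo a ((a + b) / 2) ∩ E) ∪ Set.Ioc x a := by
        intro y ⟨hyE, hy1, hy2⟩
        rcases le_or_gt y a with hc | hc
        · exact Or.inr ⟨hy1, hc⟩
        · exact Or.inl ⟨⟨hc, hy2⟩, hyE⟩
      have h2 : volume (E ∩ Set.Ioo x ((a + b) / 2)) ≤
          volume (Set.Ioo a ((a + b) / 2) ∩ E) + ENNReal.ofReal (a - x) := by
        calc volume (E ∩ Set.Ioo x ((a + b) / 2))
            ≤ volume ((Set.Ioo a ((a + b) / 2) ∩ E) ∪ Set.Ioc x a) := measure_mono hincl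
          _ ≤ volume (Set.Ioo a ((a + b) / 2) ∩ E) + volume (Set.Ioc x a) := measure_union_le _ _
          _ = volume (Set.Ioo a ((a + b) / 2) ∩ E) + ENNReal.ofReal (a - x) := by
              rw [Real.volume_Ioc]
      have h3 : ENNReal.ofReal (15 / 16 * r) ≤
          volume (Set.Ioo a ((a + b) / 2) ∩ E) + ENNReal.ofReal (a - x) := le_trans h1 h2
      have h4 : ENNReal.ofReal (15 / 16 * r - (a - x)) ≤
          volume (Set.Ioo a ((a + b) / 2) ∩ E) := by
        rw [ENNReal.ofReal_sub _ (by linarith)]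
        exact tsub_le_iff_right.mpr h3
      refine le_trans (ENNReal.ofReal_le_ofReal ?_) h4
      simp only [hrdef]
      nlinarith
    · linarith
  · -- (ii)
    intro j hj
    obtain ⟨i, rfl⟩ := Nat.exists_eq_add_of_le hj
    have e1 : 1 + i - 1 = i := by omega
    have e2 : 1 + i = i + 1 := by omega
    rw [e1, e2]
    obtain ⟨_, hb0, _⟩ := inv i
    obtain ⟨_, hd1, _⟩ := inv (i + 1)
    obtain ⟨hs1, hs2⟩ := step i
    obtain ⟨hs3, hs4⟩ := step (i + 1)
    constructor <;> [skip; skip] <;> · linarith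
  · -- (iii)
    obtain ⟨_, hd0, _⟩ := inv 0
    obtain ⟨hs1, hs2⟩ := step 0
    constructor <;> linarith
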